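/- The real subspace H = {α₀ρ⁺ + conj(α₀)ρ⁻ + α₁ε₁⁺ + conj(α₁)ε₁⁻ : α₀, α₁ ∈ ℂ} of Z is closed under the Zorn product and contains the unit 1 = ρ⁺ + ρ⁻; as a real algebra it is isomorphic to the Hamilton quaternions ℍ (in particular, every nonzero element of H is invertible in H). -/

import Mathlib

open Matrix

/-- 3-component complex vectors. -/
abbrev V3 := Fin 3 → ℂ

/-- The standard cross product on ℂ³. -/
def cross (A B : V3) : V3 := crossProduct A B

/-- The Zorn vector-matrix algebra over ℂ: elements x = (α⁺, A⁺, A⁻, α⁻). -/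
abbrev Zorn := ℂ × V3 × V3 × ℂ

/-- The Zorn product
x·y = (α⁺β⁺ − ⟨A⁺,B⁻⟩, α⁺B⁺ + β⁻A⁺ + A⁻×B⁻, β⁺A⁻ + α⁻B⁻ + A⁺×B⁺, α⁻β⁻ − ⟨A⁻,B⁺⟩). -/
noncomputable def zmul (x y : Zorn) : Zorn :=
  ( x.1 * y.1 - x.2.1 ⬝ᵥ y.2.2.1,
    x.1 • y.2.1 + y.2.2.2 • x.2.1 + cross x.2.2.1 y.2.2.1,
    y.1 • x.2.2.1 + x.2.2.2 • y.2.2.1 + cross x.2.1 y.2.1,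
    x.2.2.2 * y.2.2.2 - x.2.2.1 ⬝ᵥ y.2.1 )

/-- The unit 1 = (1,0,0,1) of the Zorn algebra. -/
noncomputable def zunit : Zorn := (1, 0, 0, 1)

/-- Membership in the sextonion subspace S : A⁺₃ = 0 and A⁻₂ = 0. -/
def inS (x : Zorn) : Prop := x.2.1 2 = 0 ∧ x.2.2.1 1 = 0

/-- The sextonion subspace S as a ℂ-submodule of the Zorn algebra. -/
noncomputable def Ssub : Submodule ℂ Zorn where
  carrier := {x | inS x}
  add_mem' := by
    rintro x y ⟨hx1, hx2⟩ ⟨hy1, hy2⟩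
    exact ⟨by simp [inS, Prod.fst_add, Prod.snd_add, Pi.add_apply, hx1, hy1],
           by simp [inS, Prod.fst_add, Prod.snd_add, Pi.add_apply, hx2, hy2]⟩
  zero_mem' := ⟨rfl, rfl⟩
  smul_mem' := by
    rintro c x ⟨hx1, hx2⟩
    exact ⟨by simp [inS, Prod.smul_fst, Prod.smul_snd, Pi.smul_apply, hx1],
           by simp [inS, Prod.smul_fst, Prod.smul_snd, Pi.smul_apply, hx2]⟩

/-- ρ⁺ = (1,0,0,0). -/
noncomputable def rhoP : Zorn := (1, 0, 0, 0)
/-- ρ⁻ = (0,0,0,1). -/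
noncomputable def rhoM : Zorn := (0, 0, 0, 1)
/-- ε_k⁺ = (0, e_k, 0, 0). -/
noncomputable def epsP (k : Fin 3) : Zorn := (0, Pi.single k 1, 0, 0)
/-- ε_k⁻ = (0, 0, e_k, 0). -/
noncomputable def epsM (k : Fin 3) : Zorn := (0, 0, Pi.single k 1, 0)

/-- Membership in the divisional quaternions H ⊂ Z:
H = {α₀ρ⁺ + conj(α₀)ρ⁻ + α₁ε₁⁺ + conj(α₁)ε₁⁻ : α₀, α₁ ∈ ℂ}. -/
noncomputable def inH (z : Zorn) : Prop :=
  ∃ a0 a1 : ℂ, z = a0 • rhoP + (starRingEnd ℂ a0) • rhoM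
    + a1 • epsP 0 + (starRingEnd ℂ a1) • epsM 0

/-- Canonical form of elements of H. -/
noncomputable def Eelt (a0 a1 : ℂ) : Zorn :=
  (a0, a1 • (Pi.single 0 1 : V3), (starRingEnd ℂ a1) • (Pi.single 0 1 : V3), starRingEnd ℂ a0)

lemma Eelt_spec (a0 a1 : ℂ) :
    a0 • rhoP + (starRingEnd ℂ a0) • rhoM + a1 • epsP 0 + (starRingEnd ℂ a1) • epsM 0
      = Eelt a0 a1 := by
  simp only [Eelt, rhoP, rhoM, epsP, epsM, Prod.smul_mk, Prod.mk_add_mk, smul_zero]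
  refine Prod.ext ?_ (Prod.ext ?_ (Prod.ext ?_ ?_)) <;> simp

lemma inH_iff (z : Zorn) : inH z ↔ ∃ a0 a1 : ℂ, z = Eelt a0 a1 := by
  unfold inH
  constructor
  · rintro ⟨a0, a1, h⟩; exact ⟨a0, a1, by rw [h, Eelt_spec]⟩
  · rintro ⟨a0, a1, h⟩; exact ⟨a0, a1, by rw [h, Eelt_spec]⟩

lemma single_dot (a b : ℂ) :
    (a • (Pi.single 0 1 : V3)) ⬝ᵥ (b • (Pi.single 0 1 : V3)) = a * b := by
  simp [dotProduct, Fin.sum_univ_three, Pi.single_apply]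

lemma single_cross (a b : ℂ) :
    cross (a • (Pi.single 0 1 : V3)) (b • (Pi.single 0 1 : V3)) = 0 := by
  funext i
  fin_cases i <;> simp [cross, crossProduct, Pi.single_apply]

lemma zmul_E (a0 a1 b0 b1 : ℂ) :
    zmul (Eelt a0 a1) (Eelt b0 b1)
      = Eelt (a0 * b0 - a1 * (starRingEnd ℂ b1)) (a0 * b1 + (starRingEnd ℂ b0) * a1) := by
  unfold zmul Eelt
  refine Prod.ext ?_ (Prod.ext ?_ (Prod.ext ?_ ?_))
  · simpa using single_dot a1 (starRingEnd ℂ b1)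
  · simp only [single_cross, add_zero]
    funext i; simp [Pi.single_apply, smul_smul]
    split_ifs <;> ring
  · simp only [single_cross, add_zero, map_add, _root_.map_mul, map_sub, RingHomCompTriple.comp_apply,
      RingHom.id_apply, Complex.conj_conj]
    funext i; simp [Pi.single_apply, smul_smul]
    split_ifs <;> ring
  · simp only [single_dot, map_add, _root_.map_mul, map_sub, Complex.conj_conj]

lemma E_add (a0 a1 b0 b1 : ℂ) :
    Eelt (a0 + b0) (a1 + b1) = Eelt a0 a1 + Eelt b0 b1 := by
  simp [Eelt, add_smul, Prod.ext_iff]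

lemma E_smul (r : ℝ) (a0 a1 : ℂ) :
    Eelt ((r : ℂ) * a0) ((r : ℂ) * a1) = (r : ℂ) • Eelt a0 a1 := by
  simp [Eelt, _root_.map_mul, Complex.conj_ofReal, mul_smul, Prod.ext_iff]

lemma E_inj {a0 a1 b0 b1 : ℂ} (h : Eelt a0 a1 = Eelt b0 b1) : a0 = b0 ∧ a1 = b1 := by
  have h0 : a0 = b0 := congrArg Prod.fst h
  have h1 : (a1 • (Pi.single 0 1 : V3)) = b1 • (Pi.single 0 1 : V3) := congrArg (fun z => z.2.1) h
  have h1' := congrFun h1 0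
  simp [Pi.single_apply] at h1'
  exact ⟨h0, h1'⟩

/-- The embedding of the quaternions. -/
noncomputable def qf (q : Quaternion ℝ) : Zorn :=
  Eelt ⟨q.re, q.imI⟩ ⟨q.imJ, q.imK⟩

lemma qf_one : qf 1 = zunit := by
  unfold qf zunit Eelt
  refine Prod.ext ?_ (Prod.ext ?_ (Prod.ext ?_ ?_)) <;>
    simp [Complex.ext_iff, Quaternion.re_one, Quaternion.imI_one, Quaternion.imJ_one,
      Quaternion.imK_one] <;>
    · funext i; simp [Complex.ext_iff]

/-- H is closed under the Zorn product, contains the unit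
1 = ρ⁺ + ρ⁻, and as a real algebra it is isomorphic to the Hamilton quaternions ℍ
(in particular every nonzero element of H is invertible in H). -/
theorem H_is_hamilton_quaternions :
    (∀ x y : Zorn, inH x → inH y → inH (zmul x y)) ∧
    inH zunit ∧ zunit = rhoP + rhoM ∧
    (∃ f : Quaternion ℝ → Zorn,
      (∀ q, inH (f q)) ∧
      (∀ z : Zorn, inH z → ∃ q, f q = z) ∧
      Function.Injective f ∧
      (∀ p q : Quaternion ℝ, f (p + q) = f p + f q) ∧
      (∀ (r : ℝ) (q : Quaternion ℝ), f (r • q) = (r : ℂ) • f q) ∧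
      f 1 = zunit ∧
      (∀ p q : Quaternion ℝ, f (p * q) = zmul (f p) (f q))) ∧
    (∀ z : Zorn, inH z → z ≠ 0 →
      ∃ w : Zorn, inH w ∧ zmul z w = zunit ∧ zmul w z = zunit)  := by
  have hclosed : ∀ x y : Zorn, inH x → inH y → inH (zmul x y) := by
    intro x y hx hy
    rw [inH_iff] at hx hy ⊢
    obtain ⟨a0, a1, rfl⟩ := hx
    obtain ⟨b0, b1, rfl⟩ := hy
    exact ⟨_, _, zmul_E a0 a1 b0 b1⟩
  refine ⟨hclosed, ?_, ?_, ?_, ?_⟩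
  · rw [inH_iff]
    exact ⟨1, 0, by rw [← qf_one]; rfl⟩
  · unfold zunit rhoP rhoM
    refine Prod.ext ?_ (Prod.ext ?_ (Prod.ext ?_ ?_)) <;> simp
  · refine ⟨qf, ?_, ?_, ?_, ?_, ?_, qf_one, ?_⟩
    · intro q; rw [inH_iff]; exact ⟨_, _, rfl⟩
    · intro z hz
      rw [inH_iff] at hz
      obtain ⟨a0, a1, rfl⟩ := hz
      exact ⟨⟨a0.re, a0.im, a1.re, a1.im⟩, rfl⟩
    · intro p q h
      obtain ⟨h0, h1⟩ := E_inj h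
      rw [Complex.ext_iff] at h0 h1
      ext <;> tauto
    · intro p q
      unfold qf
      rw [← E_add]
      congr 1 <;> simp [Complex.ext_iff]
    · intro r q
      unfold qf
      rw [← E_smul]
      congr 1 <;> simp [Complex.ext_iff]
    · intro p q
      unfold qf
      rw [zmul_E]
      congr 1 <;>
        simp [Complex.ext_iff, Complex.mul_re, Complex.mul_im, Quaternion.re_mul,
          Quaternion.imI_mul, Quaternion.imJ_mul, Quaternion.imK_mul] <;>
        constructor <;> ring
  · intro z hz hz0
    rw [inH_iff] at hz
    obtain ⟨a0, a1, rfl⟩ := hz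
    set q : Quaternion ℝ := ⟨a0.re, a0.im, a1.re, a1.im⟩ with hq
    have hfq : qf q = Eelt a0 a1 := rfl
    have hq0 : q ≠ 0 := by
      intro h
      apply hz0
      rw [← hfq, h]
      have : qf 0 = Eelt 0 0 := by
        unfold qf; congr 1 <;> simp [Complex.ext_iff]
      rw [this]
      simp [Eelt, Prod.ext_iff]
    refine ⟨qf q⁻¹, ?_, ?_, ?_⟩
    · rw [inH_iff]; exact ⟨_, _, rfl⟩
    · rw [← hfq]
      have : ∀ p r : Quaternion ℝ, zmul (qf p) (qf r) = qf (p * r) := by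
        intro p r
        unfold qf
        rw [zmul_E]
        congr 1 <;>
          simp [Complex.ext_iff, Complex.mul_re, Complex.mul_im, Quaternion.re_mul,
            Quaternion.imI_mul, Quaternion.imJ_mul, Quaternion.imK_mul] <;>
          constructor <;> ring
      rw [this, mul_inv_cancel₀ hq0, qf_one]
    · rw [← hfq]
      have : ∀ p r : Quaternion ℝ, zmul (qf p) (qf r) = qf (p * r) := by
        intro p r
        unfold qf
        rw [zmul_E]
        congr 1 <;>
          simp [Complex.ext_iff, Complex.mul_re, Complex.mul_im, Quaternion.re_mul,
            Quaternion.imI_mul, Quaternion.imJ_mul, Quaternion.imK_mul] <;>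
          constructor <;> ring
      rw [this, inv_mul_cancel₀ hq0, qf_one]
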